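/- (Averaging-time theorem.) Let (W(t))_{t≥0} be i.i.d. random n×n matrices taking finitely many values, each almost surely a set-averaging matrix for some nonempty set, define x(t+1) = W(t)x(t) for a deterministic x(0) ∈ ℝⁿ, and let λ := λ₂(E[W(0)]) with 0 < λ < 1. Then for every ε ∈ (0,1) and every nonzero x(0): if t ≥ 3·log(1/ε) / log(1/λ), then P( ‖x(t) − x_ave·1‖ / ‖x(0)‖ ≥ ε ) ≤ ε. Moreover 3·log(1/ε)/log(1/λ) ≤ 3·log(1/ε)/(1 − λ), so the same conclusion holds whenever t ≥ 3·log(1/ε)/(1 − λ). -/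

import Mathlib

open Matrix

/-- The set-averaging matrix `W_S`: entries `1/|S|` on `S × S`, a diagonal
identity for indices not in `S`, and `0` elsewhere. -/
noncomputable def setAveragingMatrix {n : ℕ} (S : Finset (Fin n)) :
    Matrix (Fin n) (Fin n) ℝ :=
  Matrix.of fun i j =>
    if i ∈ S ∧ j ∈ S then (S.card : ℝ)⁻¹
    else if i = j then 1 else 0

/-- The second largest eigenvalue (counted with multiplicity) of a symmetric real
matrix: sort the `n` eigenvalues in increasing order and take the `(n-2)`-th
(junk value `0` if the matrix is not Hermitian). -/
noncomputable def lambda2 {n : ℕ} (A : Matrix (Fin n) (Fin n) ℝ) : ℝ :=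
  if h : A.IsHermitian then
    ((Finset.univ.val.map h.eigenvalues).sort (· ≤ ·)).getD (n - 2) 0
  else 0

/-- The gossip trajectory: `traj W x0 0 _ = x0` and
`traj W x0 (t+1) σ = W (σ t) *ᵥ traj W x0 t (σ restricted)`, i.e. the solution of
`x(t+1) = W(t) x(t)` driven by the i.i.d. outcomes `σ`. -/
noncomputable def traj {n : ℕ} {Ω : Type*} (W : Ω → Matrix (Fin n) (Fin n) ℝ)
    (x0 : Fin n → ℝ) : (t : ℕ) → (Fin t → Ω) → (Fin n → ℝ)
  | 0, _ => x0
  | t + 1, σ => W (σ (Fin.last t)) *ᵥ traj W x0 t (fun k => σ k.castSucc)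

section Helpers

lemma dot_symm {n : ℕ} {A : Matrix (Fin n) (Fin n) ℝ} (hA : Aᵀ = A) (v w : Fin n → ℝ) :
    v ⬝ᵥ (A *ᵥ w) = (A *ᵥ v) ⬝ᵥ w := by
  rw [Matrix.dotProduct_mulVec, ← Matrix.vecMul_transpose, hA]

lemma dot_sum_right {n : ℕ} {ι : Type*} [Fintype ι] (v : Fin n → ℝ) (f : ι → Fin n → ℝ) :
    v ⬝ᵥ (∑ i, f i) = ∑ i, v ⬝ᵥ f i := by
  simp only [dotProduct, Finset.sum_apply, Finset.mul_sum]
  exact Finset.sum_comm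

lemma mulVec_sum' {n : ℕ} {ι : Type*} [Fintype ι] (A : Matrix (Fin n) (Fin n) ℝ)
    (f : ι → Fin n → ℝ) :
    A *ᵥ (∑ i, f i) = ∑ i, A *ᵥ f i := by
  funext j
  rw [Finset.sum_apply]
  show (fun k => A j k) ⬝ᵥ (∑ i, f i) = _
  rw [dot_sum_right]
  rfl

lemma sum_dot_left {n : ℕ} {ι : Type*} [Fintype ι] (f : ι → Fin n → ℝ) (v : Fin n → ℝ) :
    (∑ i, f i) ⬝ᵥ v = ∑ i, f i ⬝ᵥ v := by
  simp only [dotProduct, Finset.sum_apply, Finset.sum_mul]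
  exact Finset.sum_comm

lemma sum_mulVec' {n : ℕ} {ι : Type*} [Fintype ι] (M : ι → Matrix (Fin n) (Fin n) ℝ)
    (v : Fin n → ℝ) :
    (∑ ω, M ω) *ᵥ v = ∑ ω, M ω *ᵥ v := by
  funext j
  conv_rhs => rw [Finset.sum_apply]
  show (fun k => (∑ ω, M ω) j k) ⬝ᵥ v = ∑ ω, (M ω *ᵥ v) j
  have h : (fun k => (∑ ω, M ω) j k) = ∑ ω, (fun k => M ω j k) := by
    funext k
    rw [Finset.sum_apply]
    rw [Matrix.sum_apply]
  rw [h, sum_dot_left]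
  exact Finset.sum_congr rfl fun i _ => rfl

lemma dot_self_nonneg {n : ℕ} (v : Fin n → ℝ) : 0 ≤ v ⬝ᵥ v :=
  Finset.sum_nonneg fun i _ => mul_self_nonneg _

lemma sa_transpose {n : ℕ} (S : Finset (Fin n)) :
    (setAveragingMatrix S)ᵀ = setAveragingMatrix S := by
  ext i j
  simp only [setAveragingMatrix, Matrix.transpose_apply, Matrix.of_apply, and_comm, eq_comm]

lemma sa_mulVec_one {n : ℕ} (S : Finset (Fin n)) (hS : S.Nonempty) :
    setAveragingMatrix S *ᵥ (fun _ => (1:ℝ)) = fun _ => 1 := by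
  funext i
  simp only [Matrix.mulVec, dotProduct, setAveragingMatrix, Matrix.of_apply, mul_one]
  by_cases hi : i ∈ S
  · have : ∀ j, (if i ∈ S ∧ j ∈ S then (S.card : ℝ)⁻¹ else if i = j then 1 else 0)
        = if j ∈ S then (S.card : ℝ)⁻¹ else 0 := by
      intro j
      by_cases hj : j ∈ S
      · simp [hi, hj]
      · simp [hj, show i ≠ j from fun h => hj (h ▸ hi)]
    rw [Finset.sum_congr rfl (fun j _ => this j)]
    rw [Finset.sum_ite_mem, Finset.univ_inter, Finset.sum_const, nsmul_eq_mul]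
    have : (S.card : ℝ) ≠ 0 := Nat.cast_ne_zero.mpr (Finset.card_ne_zero_of_mem hS.choose_spec)
    field_simp
  · have : ∀ j, (if i ∈ S ∧ j ∈ S then (S.card : ℝ)⁻¹ else if i = j then 1 else 0)
        = if i = j then 1 else 0 := fun j => by simp [hi]
    rw [Finset.sum_congr rfl (fun j _ => this j)]
    simp

lemma sa_mul_self {n : ℕ} (S : Finset (Fin n)) (hS : S.Nonempty) :
    setAveragingMatrix S * setAveragingMatrix S = setAveragingMatrix S := by
  have hc : (S.card : ℝ) ≠ 0 := Nat.cast_ne_zero.mpr (Finset.card_ne_zero_of_mem hS.choose_spec)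
  ext i j
  rw [Matrix.mul_apply]
  simp only [setAveragingMatrix, Matrix.of_apply]
  by_cases hi : i ∈ S
  · by_cases hj : j ∈ S
    · have : ∀ k, ((if i ∈ S ∧ k ∈ S then (S.card : ℝ)⁻¹ else if i = k then 1 else 0) *
          (if k ∈ S ∧ j ∈ S then (S.card : ℝ)⁻¹ else if k = j then 1 else 0))
          = if k ∈ S then (S.card : ℝ)⁻¹ * (S.card : ℝ)⁻¹ else 0 := by
        intro k
        by_cases hk : k ∈ S
        · simp [hi, hj, hk]
        · simp [hk, show i ≠ k from fun h => hk (h ▸ hi), show k ≠ j from fun h => hk (h.symm ▸ hj)]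
      rw [Finset.sum_congr rfl (fun k _ => this k)]
      rw [Finset.sum_ite_mem, Finset.univ_inter, Finset.sum_const, nsmul_eq_mul]
      simp [hi, hj]
      field_simp
    · have : ∀ k, ((if i ∈ S ∧ k ∈ S then (S.card : ℝ)⁻¹ else if i = k then 1 else 0) *
          (if k ∈ S ∧ j ∈ S then (S.card : ℝ)⁻¹ else if k = j then 1 else 0)) = 0 := by
        intro k
        by_cases hk : k ∈ S
        · simp [hj, show k ≠ j from fun h => hj (h ▸ hk)]
        · simp [hk, show i ≠ k from fun h => hk (h ▸ hi)]
      rw [Finset.sum_congr rfl (fun k _ => this k)]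
      simp [hj, show i ≠ j from fun h => hj (h ▸ hi)]
  · have : ∀ k, ((if i ∈ S ∧ k ∈ S then (S.card : ℝ)⁻¹ else if i = k then 1 else 0) *
        (if k ∈ S ∧ j ∈ S then (S.card : ℝ)⁻¹ else if k = j then 1 else 0))
        = if i = k then (if k ∈ S ∧ j ∈ S then (S.card : ℝ)⁻¹ else if k = j then 1 else 0) else 0 := by
      intro k
      by_cases hik : i = k
      · subst hik; simp [hi]
      · simp [hik, show ¬(i ∈ S ∧ k ∈ S) from fun h => hi h.1]
    rw [Finset.sum_congr rfl (fun k _ => this k)]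
    rw [Finset.sum_ite_eq]
    simp [hi]

lemma sa_norm {n : ℕ} (S : Finset (Fin n)) (hS : S.Nonempty) (y : Fin n → ℝ) :
    (setAveragingMatrix S *ᵥ y) ⬝ᵥ (setAveragingMatrix S *ᵥ y)
      = y ⬝ᵥ (setAveragingMatrix S *ᵥ y) := by
  rw [dot_symm (sa_transpose S) (setAveragingMatrix S *ᵥ y) y, Matrix.mulVec_mulVec,
    sa_mul_self S hS, dotProduct_comm]

lemma count_le_one {n : ℕ} (l : List ℝ) (hs : l.Pairwise (· ≤ ·)) (hl : l.length = n)
    (hn : 1 ≤ n) :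
    List.countP (fun a => decide (l.getD (n-2) 0 < a)) l ≤ 1 := by
  have hidx : n - 2 < l.length := by omega
  set x := l.getD (n-2) 0 with hx
  have key : List.countP (fun a => decide (x < a)) (l.take (n-1))
      + List.countP (fun a => decide (x < a)) (l.drop (n-1))
      = List.countP (fun a => decide (x < a)) l := by
    rw [← List.countP_append, List.take_append_drop]
  have h1 : List.countP (fun a => decide (x < a)) (l.take (n-1)) = 0 := by
    rw [List.countP_eq_zero]
    intro a ha
    obtain ⟨k, hk, rfl⟩ := List.mem_iff_getElem.mp ha
    have hk' : k < n - 1 := lt_of_lt_of_le hk (by simp [hl])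
    simp only [List.getElem_take, decide_eq_true_eq, not_lt]
    rw [hx, List.getD_eq_getElem l 0 hidx]
    exact hs.rel_get_of_le (a := ⟨k, by omega⟩) (b := ⟨n-2, hidx⟩) (by simp; omega)
  have h2 : List.countP (fun a => decide (x < a)) (l.drop (n-1)) ≤ 1 := by
    calc List.countP _ (l.drop (n-1)) ≤ (l.drop (n-1)).length := List.countP_le_length
    _ ≤ 1 := by rw [List.length_drop]; omega
  omega

lemma quad_bound {n : ℕ} (A : Matrix (Fin n) (Fin n) ℝ) (hA : A.IsHermitian)
    (hone : A *ᵥ (fun _ => (1:ℝ)) = fun _ => 1) (hl1 : lambda2 A < 1)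
    (y : Fin n → ℝ) (hy : y ⬝ᵥ (fun _ => (1:ℝ)) = 0) :
    y ⬝ᵥ (A *ᵥ y) ≤ lambda2 A * (y ⬝ᵥ y) := by
  rcases Nat.eq_zero_or_pos n with hn | hn
  · subst hn
    simp [dotProduct]
  have hAt : Aᵀ = A := by simpa using hA.eq
  set μ := hA.eigenvalues with hμ
  set B : Fin n → (Fin n → ℝ) := fun i => (WithLp.equiv 2 _ (hA.eigenvectorBasis i)) with hB
  have hmul : ∀ i, A *ᵥ B i = μ i • B i := fun i => hA.mulVec_eigenvectorBasis i
  have hexp : ∀ v : Fin n → ℝ, v = ∑ i, (B i ⬝ᵥ v) • B i := by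
    intro v
    have := hA.eigenvectorBasis.sum_repr ((WithLp.equiv 2 _).symm v)
    have hrepr : ∀ i, hA.eigenvectorBasis.repr ((WithLp.equiv 2 _).symm v) i = B i ⬝ᵥ v := by
      intro i
      rw [OrthonormalBasis.repr_apply_apply]
      simp [PiLp.inner_apply, dotProduct, hB, WithLp.equiv]
      exact Finset.sum_congr rfl fun _ _ => mul_comm _ _
    calc v = (WithLp.equiv 2 _) ((WithLp.equiv 2 _).symm v) := rfl
    _ = (WithLp.equiv 2 _) (∑ i, hA.eigenvectorBasis.repr ((WithLp.equiv 2 _).symm v) i •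
          hA.eigenvectorBasis i) := by rw [this]
    _ = ∑ i, (B i ⬝ᵥ v) • B i := by
        simp only [← hrepr]
        simp [hB, WithLp.ofLp_sum]
  set T : Finset (Fin n) := Finset.univ.filter (fun i => lambda2 A < μ i) with hTdef
  have hT : T.card ≤ 1 := by
    have e1 : T.card = Multiset.countP (fun a => lambda2 A < a) (Finset.univ.val.map μ) := by
      rw [Multiset.countP_map, hTdef, Finset.card_def, Finset.filter_val]
    set l := (Finset.univ.val.map μ).sort (· ≤ ·) with hldef
    have e2 : (Finset.univ.val.map μ) = (l : Multiset ℝ) := (Multiset.sort_eq _ _).symm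
    have hlen : l.length = n := by rw [hldef, Multiset.length_sort]; simp
    have hlam2 : lambda2 A = l.getD (n-2) 0 := by
      rw [lambda2, dif_pos hA, ← hμ, ← hldef]
    rw [e1, e2, Multiset.coe_countP, hlam2]
    exact count_le_one l (Multiset.pairwise_sort _ _) hlen hn
  set d : Fin n → ℝ := fun i => B i ⬝ᵥ (fun _ => 1) with hd
  have heig : ∀ i, μ i * d i = d i := by
    intro i
    have h1 : B i ⬝ᵥ (A *ᵥ (fun _ => (1:ℝ))) = d i := by rw [hone]
    have h2 : B i ⬝ᵥ (A *ᵥ (fun _ => (1:ℝ))) = μ i * d i := by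
      rw [dot_symm hAt, hmul, smul_dotProduct]
      rfl
    exact h2.symm.trans h1
  have hones : (fun _ => (1:ℝ)) = ∑ i, d i • B i := hexp _
  obtain ⟨i₀, hi₀⟩ : ∃ i, d i ≠ 0 := by
    by_contra h
    push_neg at h
    have : (fun _ => (1:ℝ)) = (0 : Fin n → ℝ) := by
      rw [hones]
      simp [h]
    exact one_ne_zero (congrFun this ⟨0, hn⟩)
  have hmem : ∀ j, d j ≠ 0 → j ∈ T := by
    intro j hj
    have : μ j = 1 := mul_right_cancel₀ hj (by rw [heig j, one_mul])
    rw [hTdef]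
    simp [this, hl1]
  have huniq : ∀ j, d j ≠ 0 → j = i₀ :=
    fun j hj => Finset.card_le_one.mp hT j (hmem j hj) i₀ (hmem i₀ hi₀)
  have hones2 : (fun _ => (1:ℝ)) = d i₀ • B i₀ := by
    rw [hones, Finset.sum_eq_single i₀]
    · intro b _ hb
      rw [of_not_not (fun h => hb (huniq b h))]
      simp
    · simp
  have hci₀ : B i₀ ⬝ᵥ y = 0 := by
    have h0 : (fun _ => (1:ℝ)) ⬝ᵥ y = 0 := by rw [dotProduct_comm]; exact hy
    rw [hones2, smul_dotProduct] at h0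
    have h0' : d i₀ * (B i₀ ⬝ᵥ y) = 0 := h0
    exact (mul_eq_zero.mp h0').resolve_left hi₀
  have hle : ∀ i, i ≠ i₀ → μ i ≤ lambda2 A := by
    intro i hi
    by_contra h
    push_neg at h
    have hiT : i ∈ T := by rw [hTdef]; simp [h]
    exact hi (Finset.card_le_one.mp hT i hiT i₀ (hmem i₀ hi₀))
  have hAy : A *ᵥ y = ∑ i, ((B i ⬝ᵥ y) * μ i) • B i := by
    conv_lhs => rw [hexp y]
    rw [mulVec_sum']
    refine Finset.sum_congr rfl fun i _ => ?_
    rw [Matrix.mulVec_smul, hmul, smul_smul]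
  have hyA : y ⬝ᵥ (A *ᵥ y) = ∑ i, μ i * ((B i ⬝ᵥ y) * (B i ⬝ᵥ y)) := by
    rw [hAy, dot_sum_right]
    refine Finset.sum_congr rfl fun i _ => ?_
    rw [dotProduct_smul, dotProduct_comm y (B i), smul_eq_mul]
    ring
  have hyy : y ⬝ᵥ y = ∑ i, (B i ⬝ᵥ y) * (B i ⬝ᵥ y) := by
    nth_rewrite 2 [hexp y]
    rw [dot_sum_right]
    refine Finset.sum_congr rfl fun i _ => ?_
    rw [dotProduct_smul, dotProduct_comm y (B i), smul_eq_mul]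
  rw [hyA, hyy, Finset.mul_sum]
  refine Finset.sum_le_sum fun i _ => ?_
  by_cases hi : i = i₀
  · rw [hi, hci₀]
    simp
  · exact mul_le_mul_of_nonneg_right (hle i hi) (mul_self_nonneg _)

end Helpers

/-- Averaging-time theorem.  Let `(W(t))` be i.i.d. random matrices taking finitely
many values (common law `p`), each almost surely a set-averaging matrix for some
nonempty set, let `x(t+1) = W(t) x(t)` from a deterministic `x(0) ≠ 0`, and let
`λ := λ₂(E[W(0)])` with `0 < λ < 1`.  Then for every `ε ∈ (0,1)`, whenever
`t ≥ 3 log(1/ε) / log(1/λ)` we have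
`P(‖x(t) − x_ave·1‖ / ‖x(0)‖ ≥ ε) ≤ ε`; moreover
`3 log(1/ε)/log(1/λ) ≤ 3 log(1/ε)/(1 − λ)`, so the same conclusion holds whenever
`t ≥ 3 log(1/ε)/(1 − λ)`. -/
theorem averaging_time_bound {n : ℕ} {Ω : Type*} [Fintype Ω]
    (p : Ω → ℝ) (hp : ∀ ω, 0 ≤ p ω) (hsum : ∑ ω, p ω = 1)
    (W : Ω → Matrix (Fin n) (Fin n) ℝ)
    (hW : ∀ ω, 0 < p ω → ∃ S : Finset (Fin n), S.Nonempty ∧ W ω = setAveragingMatrix S)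
    (hlam0 : 0 < lambda2 (∑ ω, p ω • W ω))
    (hlam1 : lambda2 (∑ ω, p ω • W ω) < 1) :
    (∀ ε : ℝ, 0 < ε → ε < 1 → ∀ x0 : Fin n → ℝ, x0 ≠ 0 → ∀ t : ℕ,
      3 * Real.log (1 / ε) / Real.log (1 / lambda2 (∑ ω, p ω • W ω)) ≤ t →
      ∑ σ : Fin t → Ω,
        (if ε ≤ Real.sqrt ((traj W x0 t σ - ((∑ i, x0 i) / n) • fun _ => (1 : ℝ)) ⬝ᵥ
                  (traj W x0 t σ - ((∑ i, x0 i) / n) • fun _ => (1 : ℝ))) /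
                Real.sqrt (x0 ⬝ᵥ x0)
          then ∏ k, p (σ k) else 0) ≤ ε) ∧
    (∀ ε : ℝ, 0 < ε → ε < 1 →
      3 * Real.log (1 / ε) / Real.log (1 / lambda2 (∑ ω, p ω • W ω))
        ≤ 3 * Real.log (1 / ε) / (1 - lambda2 (∑ ω, p ω • W ω))) := by
  classical
  set A : Matrix (Fin n) (Fin n) ℝ := ∑ ω, p ω • W ω with hAdef
  set lam : ℝ := lambda2 A with hlamdef
  -- basic facts about A
  have hWt : ∀ ω, p ω • (W ω)ᵀ = p ω • W ω := by
    intro ω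
    rcases (hp ω).lt_or_eq with h | h
    · obtain ⟨S, hS, hWS⟩ := hW ω h
      rw [hWS, sa_transpose]
    · rw [← h, zero_smul, zero_smul]
  have hW1 : ∀ ω, 0 < p ω → W ω *ᵥ (fun _ => (1:ℝ)) = fun _ => 1 := by
    intro ω h
    obtain ⟨S, hS, hWS⟩ := hW ω h
    rw [hWS]
    exact sa_mulVec_one S hS
  have hWn : ∀ ω, 0 < p ω → ∀ y : Fin n → ℝ,
      (W ω *ᵥ y) ⬝ᵥ (W ω *ᵥ y) = y ⬝ᵥ (W ω *ᵥ y) := by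
    intro ω h y
    obtain ⟨S, hS, hWS⟩ := hW ω h
    rw [hWS]
    exact sa_norm S hS y
  have hWtr : ∀ ω, 0 < p ω → (W ω)ᵀ = W ω := by
    intro ω h
    obtain ⟨S, hS, hWS⟩ := hW ω h
    rw [hWS]
    exact sa_transpose S
  have hAt : Aᵀ = A := by
    rw [hAdef, Matrix.transpose_sum]
    refine Finset.sum_congr rfl fun ω _ => ?_
    rw [Matrix.transpose_smul]
    exact hWt ω
  have hAH : A.IsHermitian := by
    ext i j
    rw [Matrix.conjTranspose_apply, star_trivial]
    exact congrFun (congrFun hAt i) j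
  have hA1 : A *ᵥ (fun _ => (1:ℝ)) = fun _ => 1 := by
    rw [hAdef, sum_mulVec']
    have : ∀ ω : Ω, (p ω • W ω) *ᵥ (fun _ => (1:ℝ)) = p ω • (fun _ => (1:ℝ)) := by
      intro ω
      rw [Matrix.smul_mulVec]
      rcases (hp ω).lt_or_eq with h | h
      · rw [hW1 ω h]
      · rw [← h, zero_smul, zero_smul]
    rw [Finset.sum_congr rfl fun ω _ => this ω, ← Finset.sum_smul, hsum, one_smul]
  have hquad : ∀ y : Fin n → ℝ, y ⬝ᵥ (fun _ => (1:ℝ)) = 0 →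
      y ⬝ᵥ (A *ᵥ y) ≤ lam * (y ⬝ᵥ y) := fun y hy => quad_bound A hAH hA1 hlam1 y hy
  constructor
  · -- main probabilistic bound
    intro ε hε0 hε1 x0 hx0 t ht
    obtain ⟨i1, hi1⟩ : ∃ i, x0 i ≠ 0 := Function.ne_iff.mp hx0
    have hn : 0 < n := i1.pos
    have hnR : (0:ℝ) < n := Nat.cast_pos.mpr hn
    set c : ℝ := (∑ i, x0 i) / n with hcdef
    set y : (t : ℕ) → (Fin t → Ω) → (Fin n → ℝ) :=
      fun t σ => traj W x0 t σ - c • (fun _ => (1:ℝ)) with hydef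
    -- step identity
    have hy_step : ∀ ω, 0 < p ω → ∀ (s : ℕ) (σ : Fin s → Ω),
        y (s+1) (Fin.snoc σ ω) = W ω *ᵥ y s σ := by
      intro ω hω s σ
      have htraj : ∀ (σ' : Fin (s+1) → Ω), traj W x0 (s+1) σ'
          = W (σ' (Fin.last s)) *ᵥ traj W x0 s (fun k => σ' k.castSucc) := fun _ => rfl
      have h1 : traj W x0 (s+1) (Fin.snoc σ ω)
          = W ω *ᵥ traj W x0 s σ := by
        have h2 : (fun k : Fin s => (Fin.snoc σ ω : Fin (s+1) → Ω) k.castSucc) = σ := by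
          funext k
          simp
        rw [htraj, Fin.snoc_last, h2]
      rw [hydef]
      simp only
      rw [h1, Matrix.mulVec_sub, Matrix.mulVec_smul, hW1 ω hω]
    -- orthogonality to the ones vector
    have horth : ∀ (s : ℕ) (σ : Fin s → Ω), (∀ k, 0 < p (σ k)) →
        y s σ ⬝ᵥ (fun _ => (1:ℝ)) = 0 := by
      intro s
      induction s with
      | zero =>
        intro σ _
        rw [hydef]
        simp only
        show (x0 - c • (fun _ => (1:ℝ))) ⬝ᵥ (fun _ => (1:ℝ)) = 0
        rw [sub_dotProduct, smul_dotProduct]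
        have e1 : x0 ⬝ᵥ (fun _ => (1:ℝ)) = ∑ i, x0 i := by
          simp [dotProduct]
        have e2 : ((fun _ => (1:ℝ)) : Fin n → ℝ) ⬝ᵥ (fun _ => (1:ℝ)) = (n:ℝ) := by
          simp [dotProduct]
        rw [e1, e2, smul_eq_mul, hcdef]
        field_simp
        ring
      | succ s ih =>
        intro σ hσ
        have hσ' : σ = Fin.snoc (Fin.init σ) (σ (Fin.last s)) := (Fin.snoc_init_self σ).symm
        have hlastpos : 0 < p (σ (Fin.last s)) := hσ _
        rw [hσ', hy_step _ hlastpos s (Fin.init σ)]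
        rw [dotProduct_comm, dot_symm (hWtr _ hlastpos), hW1 _ hlastpos,
          dotProduct_comm]
        exact ih (Fin.init σ) (fun k => hσ k.castSucc)
    -- expectation recursion
    have hlamnn : 0 ≤ lam := le_of_lt hlam0
    have hmain : ∀ s : ℕ, ∑ σ : Fin s → Ω, (∏ k, p (σ k)) * (y s σ ⬝ᵥ y s σ)
        ≤ lam ^ s * (y 0 (fun k => Fin.elim0 k) ⬝ᵥ y 0 (fun k => Fin.elim0 k)) := by
      intro s
      induction s with
      | zero =>
        rw [pow_zero, one_mul, Fintype.sum_unique]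
        have h : (∏ k : Fin 0, p ((default : Fin 0 → Ω) k)) = 1 := by simp
        rw [h, one_mul]
        exact le_of_eq rfl
      | succ s ih =>
        rw [← Equiv.sum_comp (Fin.snocEquiv (fun _ => Ω)), Fintype.sum_prod_type]
        have hre : ∀ (ω : Ω) (σ : Fin s → Ω),
            (Fin.snocEquiv (fun _ => Ω)) (ω, σ) = Fin.snoc σ ω := by
          intro ω σ
          simp [Fin.snocEquiv]
        calc ∑ ω : Ω, ∑ σ : Fin s → Ω,
              (∏ k, p ((Fin.snocEquiv (fun _ => Ω)) (ω, σ) k)) *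
              (y (s+1) ((Fin.snocEquiv (fun _ => Ω)) (ω, σ)) ⬝ᵥ
                y (s+1) ((Fin.snocEquiv (fun _ => Ω)) (ω, σ)))
            = ∑ σ : Fin s → Ω, ∑ ω : Ω, ((∏ k, p (σ k)) * p ω) *
              (y (s+1) (Fin.snoc σ ω) ⬝ᵥ y (s+1) (Fin.snoc σ ω)) := by
              rw [Finset.sum_comm]
              refine Finset.sum_congr rfl fun σ _ => Finset.sum_congr rfl fun ω _ => ?_
              rw [hre]
              simp only [Fin.prod_univ_castSucc, Fin.snoc_castSucc, Fin.snoc_last]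
          _ ≤ ∑ σ : Fin s → Ω, lam * ((∏ k, p (σ k)) * (y s σ ⬝ᵥ y s σ)) := by
              refine Finset.sum_le_sum fun σ _ => ?_
              by_cases hσ : ∀ k, 0 < p (σ k)
              · have hterm : ∀ ω : Ω, ((∏ k, p (σ k)) * p ω) *
                    (y (s+1) (Fin.snoc σ ω) ⬝ᵥ y (s+1) (Fin.snoc σ ω))
                    = (∏ k, p (σ k)) * (y s σ ⬝ᵥ ((p ω • W ω) *ᵥ y s σ)) := by
                  intro ω
                  rcases (hp ω).lt_or_eq with h | h
                  · rw [hy_step ω h s σ, hWn ω h, Matrix.smul_mulVec,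
                      dotProduct_smul, smul_eq_mul]
                    ring
                  · rw [← h, zero_smul, Matrix.zero_mulVec, dotProduct_zero]
                    ring
                rw [Finset.sum_congr rfl fun ω _ => hterm ω, ← Finset.mul_sum,
                  ← dot_sum_right, ← sum_mulVec']
                have hq := hquad (y s σ) (horth s σ hσ)
                have hprodnn : 0 ≤ ∏ k, p (σ k) := Finset.prod_nonneg fun k _ => hp _
                calc (∏ k, p (σ k)) * (y s σ ⬝ᵥ (A *ᵥ y s σ))
                    ≤ (∏ k, p (σ k)) * (lam * (y s σ ⬝ᵥ y s σ)) :=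
                      mul_le_mul_of_nonneg_left hq hprodnn
                  _ = lam * ((∏ k, p (σ k)) * (y s σ ⬝ᵥ y s σ)) := by ring
              · push_neg at hσ
                obtain ⟨k0, hk0⟩ := hσ
                have hpk : p (σ k0) = 0 := le_antisymm hk0 (hp _)
                have hprod0 : (∏ k, p (σ k)) = 0 :=
                  Finset.prod_eq_zero (Finset.mem_univ k0) hpk
                rw [hprod0]
                simp
          _ = lam * ∑ σ : Fin s → Ω, (∏ k, p (σ k)) * (y s σ ⬝ᵥ y s σ) := by
              rw [Finset.mul_sum]
          _ ≤ lam * (lam ^ s * (y 0 (fun k => Fin.elim0 k) ⬝ᵥ y 0 (fun k => Fin.elim0 k))) :=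
              mul_le_mul_of_nonneg_left ih hlamnn
          _ = lam ^ (s+1) * (y 0 (fun k => Fin.elim0 k) ⬝ᵥ y 0 (fun k => Fin.elim0 k)) := by
              ring
    -- initial bound
    set r : ℝ := x0 ⬝ᵥ x0 with hrdef
    have hrpos : 0 < r := by
      rcases lt_or_eq_of_le (dot_self_nonneg x0) with h | h
      · exact h
      · exact absurd (dotProduct_self_eq_zero.mp h.symm) hx0
    have hy0le : (y 0 (fun k => Fin.elim0 k) ⬝ᵥ y 0 (fun k => Fin.elim0 k)) ≤ r := by
      rw [hydef]
      simp only
      show (x0 - c • (fun _ => (1:ℝ))) ⬝ᵥ (x0 - c • (fun _ => (1:ℝ))) ≤ r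
      have e1 : x0 ⬝ᵥ (fun _ => (1:ℝ)) = ∑ i, x0 i := by simp [dotProduct]
      have e2 : (fun _ => (1:ℝ)) ⬝ᵥ x0 = ∑ i, x0 i := by simp [dotProduct]
      have e3 : ((fun _ => (1:ℝ)) : Fin n → ℝ) ⬝ᵥ (fun _ => (1:ℝ)) = (n:ℝ) := by
        simp [dotProduct]
      rw [sub_dotProduct, dotProduct_sub, dotProduct_sub,
        smul_dotProduct, smul_dotProduct, dotProduct_smul,
        dotProduct_smul, e1, e2, e3, ← hrdef]
      simp only [smul_eq_mul]
      have hccn : c * (c * (n:ℝ)) = c * (∑ i, x0 i) := by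
        rw [hcdef]
        field_simp
      have hcs : 0 ≤ c * (∑ i, x0 i) := by
        rw [hcdef, div_mul_eq_mul_div]
        exact div_nonneg (mul_self_nonneg _) hnR.le
      nlinarith [hcs, hccn]
    -- lam ^ t ≤ ε ^ 3
    have hloglam : 0 < Real.log (1 / lam) := by
      apply Real.log_pos
      rw [lt_div_iff₀ hlam0, one_mul]
      exact hlam1
    have hlampow : lam ^ t ≤ ε ^ 3 := by
      have h1 : 3 * Real.log (1 / ε) ≤ t * Real.log (1 / lam) :=
        (div_le_iff₀ hloglam).mp ht
      rw [one_div, one_div, Real.log_inv, Real.log_inv] at h1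
      have h2 : Real.log (lam ^ t) ≤ Real.log (ε ^ 3) := by
        rw [Real.log_pow, Real.log_pow]
        push_cast
        linarith
      exact (Real.log_le_log_iff (pow_pos hlam0 t) (pow_pos hε0 3)).mp h2
    -- Markov
    have hmarkov : ∀ σ : Fin t → Ω,
        (if ε ≤ Real.sqrt (y t σ ⬝ᵥ y t σ) / Real.sqrt r then ∏ k, p (σ k) else 0)
        ≤ ((∏ k, p (σ k)) * (y t σ ⬝ᵥ y t σ)) * (ε^2 * r)⁻¹ := by
      intro σ
      have hq : 0 ≤ y t σ ⬝ᵥ y t σ := dot_self_nonneg _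
      have hprodnn : 0 ≤ ∏ k, p (σ k) := Finset.prod_nonneg fun k _ => hp _
      have hεr : 0 < ε^2 * r := mul_pos (pow_pos hε0 2) hrpos
      by_cases hcond : ε ≤ Real.sqrt (y t σ ⬝ᵥ y t σ) / Real.sqrt r
      · rw [if_pos hcond]
        have hsr : 0 < Real.sqrt r := Real.sqrt_pos.mpr hrpos
        have h1 : ε * Real.sqrt r ≤ Real.sqrt (y t σ ⬝ᵥ y t σ) :=
          (le_div_iff₀ hsr).mp hcond
        have h2 : ε^2 * r ≤ y t σ ⬝ᵥ y t σ := by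
          have := mul_self_le_mul_self (by positivity) h1
          rw [Real.mul_self_sqrt hq] at this
          calc ε^2 * r = (ε * Real.sqrt r) * (ε * Real.sqrt r) := by
                rw [show (ε * Real.sqrt r) * (ε * Real.sqrt r)
                    = ε^2 * (Real.sqrt r * Real.sqrt r) by ring, Real.mul_self_sqrt hrpos.le]
            _ ≤ _ := this
        have h3 : 1 ≤ (y t σ ⬝ᵥ y t σ) * (ε^2 * r)⁻¹ := by
          rw [← div_eq_mul_inv]
          exact (one_le_div hεr).mpr h2
        calc (∏ k, p (σ k)) = (∏ k, p (σ k)) * 1 := by ring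
          _ ≤ (∏ k, p (σ k)) * ((y t σ ⬝ᵥ y t σ) * (ε^2 * r)⁻¹) :=
              mul_le_mul_of_nonneg_left h3 hprodnn
          _ = ((∏ k, p (σ k)) * (y t σ ⬝ᵥ y t σ)) * (ε^2 * r)⁻¹ := by ring
      · rw [if_neg hcond]
        positivity
    calc ∑ σ : Fin t → Ω,
          (if ε ≤ Real.sqrt ((traj W x0 t σ - ((∑ i, x0 i) / n) • fun _ => (1 : ℝ)) ⬝ᵥ
                (traj W x0 t σ - ((∑ i, x0 i) / n) • fun _ => (1 : ℝ))) /
              Real.sqrt (x0 ⬝ᵥ x0)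
            then ∏ k, p (σ k) else 0)
        = ∑ σ : Fin t → Ω,
          (if ε ≤ Real.sqrt (y t σ ⬝ᵥ y t σ) / Real.sqrt r then ∏ k, p (σ k) else 0) := rfl
      _ ≤ ∑ σ : Fin t → Ω, ((∏ k, p (σ k)) * (y t σ ⬝ᵥ y t σ)) * (ε^2 * r)⁻¹ :=
          Finset.sum_le_sum fun σ _ => hmarkov σ
      _ = (∑ σ : Fin t → Ω, (∏ k, p (σ k)) * (y t σ ⬝ᵥ y t σ)) * (ε^2 * r)⁻¹ := by
          rw [Finset.sum_mul]
      _ ≤ (lam ^ t * (y 0 (fun k => Fin.elim0 k) ⬝ᵥ y 0 (fun k => Fin.elim0 k))) * (ε^2 * r)⁻¹ := by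
          apply mul_le_mul_of_nonneg_right (hmain t)
          positivity
      _ ≤ (lam ^ t * r) * (ε^2 * r)⁻¹ := by
          apply mul_le_mul_of_nonneg_right _ (by positivity)
          exact mul_le_mul_of_nonneg_left hy0le (pow_nonneg hlamnn t)
      _ ≤ (ε ^ 3 * r) * (ε^2 * r)⁻¹ := by
          apply mul_le_mul_of_nonneg_right _ (by positivity)
          exact mul_le_mul_of_nonneg_right hlampow hrpos.le
      _ = ε := by
          field_simp
  · -- comparison of the two time bounds
    intro ε hε0 hε1
    have hlog : 1 - lam ≤ Real.log (1 / lam) := by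
      have := Real.log_le_sub_one_of_pos hlam0
      rw [one_div, Real.log_inv]
      linarith
    have h1lam : 0 < 1 - lam := by linarith
    have hnum : 0 ≤ 3 * Real.log (1 / ε) := by
      have : 1 < 1 / ε := by rw [lt_div_iff₀ hε0, one_mul]; exact hε1
      have := Real.log_pos this
      linarith
    exact div_le_div_of_nonneg_left hnum h1lam hlog
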